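/- Let B be an associative unital ℂ-algebra in which the operations + and ∩ on the set of two-sided ideals are distributive with respect to each other, i.e. (I + J) ∩ K = (I ∩ K) + (J ∩ K) for all two-sided ideals I, J, K of B. Then every covering of B is complete. -/

import Mathlib

private lemma mem_finset_inf' {B : Type*} [Ring B] {ι : Type} (s : Finset ι)
    (f : ι → TwoSidedIdeal B) (x : B) :
    x ∈ s.inf f ↔ ∀ i ∈ s, x ∈ f i := by
  classical
  induction s using Finset.induction with
  | empty => simp [TwoSidedIdeal.mem_top]
  | insert _ _ hj ih =>
    rw [Finset.inf_insert]
    simp [TwoSidedIdeal.mem_inf, ih]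

/-- If the operations `+` (= `⊔`) and `∩` (= `⊓`) on the set of two-sided
ideals of an associative unital ℂ-algebra `B` are distributive with respect to each other,
then every (finite) covering of `B` is complete. -/
theorem covering_complete_of_distributive
    {B : Type*} [Ring B] [Algebra ℂ B]
    (hdist : ∀ I J K : TwoSidedIdeal B, (I ⊔ J) ⊓ K = (I ⊓ K) ⊔ (J ⊓ K)) :
    ∀ (ι : Type) [Fintype ι] (𝒥 : ι → TwoSidedIdeal B),
      (∀ x : B, (∀ i, x ∈ 𝒥 i) → x = 0) →
      ∀ b : ι → B,
        (∀ i j, ∃ u ∈ 𝒥 i, ∃ v ∈ 𝒥 j, b i - b j = u + v) →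
        ∃ a : B, ∀ i, a - b i ∈ 𝒥 i := by
  classical
  intro ι _ 𝒥 _hcov b hcompat
  letI : DistribLattice (TwoSidedIdeal B) := DistribLattice.ofInfSupLe (fun I J K => by
    rw [inf_comm, hdist, inf_comm I J, inf_comm I K])
  suffices h : ∀ s : Finset ι, ∃ a : B, ∀ i ∈ s, a - b i ∈ 𝒥 i by
    obtain ⟨a, ha⟩ := h Finset.univ
    exact ⟨a, fun i => ha i (Finset.mem_univ i)⟩
  intro s
  induction s using Finset.induction with
  | empty => exact ⟨0, by simp⟩
  | @insert j s hj ih =>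
    obtain ⟨a, ha⟩ := ih
    have key : a - b j ∈ (s.inf 𝒥) ⊔ 𝒥 j := by
      rw [Finset.inf_sup_distrib_right, mem_finset_inf']
      intro i hi
      obtain ⟨u, hu, v, hv, huv⟩ := hcompat i j
      have : a - b j = ((a - b i) + u) + v := by
        have h3 : a - b j = (a - b i) + (b i - b j) := by abel
        rw [h3, huv, ← add_assoc]
      rw [this]
      exact TwoSidedIdeal.add_mem _
        (TwoSidedIdeal.mem_sup_left (TwoSidedIdeal.add_mem _ (ha i hi) hu))
        (TwoSidedIdeal.mem_sup_right hv)
    rw [TwoSidedIdeal.mem_sup] at key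
    obtain ⟨u, hu, v, hv, huv⟩ := key
    refine ⟨a - u, fun i hi => ?_⟩
    rcases Finset.mem_insert.mp hi with rfl | hi
    · have : a - u - b i = v := by
        have h3 : a - u - b i = (a - b i) - u := by abel
        rw [h3, ← huv]; abel
      rw [this]; exact hv
    · have : a - u - b i = (a - b i) + (-u) := by abel
      rw [this]
      exact TwoSidedIdeal.add_mem _ (ha i hi)
        (TwoSidedIdeal.neg_mem _ ((mem_finset_inf' s 𝒥 u).mp hu i hi))
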